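/- With the setup of PreDropout (independent masks m_j on inputs, scaled by 1/p), Var[(1/p) Σ_j m_j w_j x_j] = (1/p) Σ_j w_j² E[x_j²] + Σ_{j≠k} w_j w_k E[x_j x_k] − (Σ_j w_j E[x_j])², which exceeds the test-phase variance Var[Σ_j w_j x_j] whenever Σ_j w_j² E[x_j²] > 0 and p < 1; hence the PreDropout inconsistency ratio is < 1. -/

import Mathlib

open MeasureTheory ProbabilityTheory Finset

/-- A real random variable `m` is Bernoulli with parameter `p`. -/
def IsBernoulli {Ω : Type*} [MeasurableSpace Ω] (μ : Measure Ω) (p : ℝ) (m : Ω → ℝ) : Prop :=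
  Measurable m ∧ (∀ ω, m ω = 0 ∨ m ω = 1) ∧ μ {ω | m ω = 1} = ENNReal.ofReal p

section aux

variable {Ω : Type*} [MeasurableSpace Ω] {μ : Measure Ω}

lemma IsBernoulli.integral_eq {p : ℝ} {m : Ω → ℝ} (hp : 0 ≤ p) (h : IsBernoulli μ p m) :
    ∫ ω, m ω ∂μ = p := by
  obtain ⟨hmeas, h01, hμ⟩ := h
  have hs : MeasurableSet {ω | m ω = 1} := hmeas (measurableSet_singleton 1)
  have hind : m = Set.indicator {ω | m ω = 1} (fun _ => (1 : ℝ)) := by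
    funext ω
    rcases h01 ω with h0 | h1
    · have : ω ∉ {ω | m ω = 1} := by simp [Set.mem_setOf_eq, h0]
      simp [Set.indicator_apply, this, h0]
    · have : ω ∈ {ω | m ω = 1} := h1
      simp [Set.indicator_apply, this, h1]
  rw [hind, integral_indicator_const _ hs, measureReal_def, hμ, smul_eq_mul, mul_one,
    ENNReal.toReal_ofReal hp]

lemma integrable_mul_of_memL2 {f g : Ω → ℝ} (hf : MemLp f 2 μ) (hg : MemLp g 2 μ) :
    Integrable (fun ω => f ω * g ω) μ := by
  refine (hf.integrable_sq.add hg.integrable_sq).mono'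
    (hf.aestronglyMeasurable.mul hg.aestronglyMeasurable) ?_
  filter_upwards with ω
  rw [Real.norm_eq_abs, abs_mul, Pi.add_apply]
  nlinarith [sq_abs (f ω), sq_abs (g ω), sq_nonneg (|f ω| - |g ω|), abs_nonneg (f ω),
    abs_nonneg (g ω)]

lemma integral_sq_sum {n : ℕ} [IsProbabilityMeasure μ] {f : Fin n → Ω → ℝ}
    (hf : ∀ j, MemLp (f j) 2 μ) :
    ∫ ω, (∑ j, f j ω) ^ 2 ∂μ = ∑ j, ∑ k, ∫ ω, f j ω * f k ω ∂μ := by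
  have h1 : (fun ω => (∑ j, f j ω) ^ 2) = fun ω => ∑ j, ∑ k, f j ω * f k ω := by
    funext ω
    rw [sq, Finset.sum_mul_sum]
  rw [h1, integral_finset_sum]
  · refine Finset.sum_congr rfl fun j _ => ?_
    exact integral_finset_sum _ fun k _ => integrable_mul_of_memL2 (hf j) (hf k)
  · exact fun j _ => integrable_finset_sum _ fun k _ =>
      integrable_mul_of_memL2 (hf j) (hf k)

end aux

/-- PreDropout variance formula and inconsistency: with independent Bernoulli
masks `m_j` on the inputs, `Var[(1/p) Σ_j m_j w_j x_j] = (1/p) Σ_j w_j² E[x_j²]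
+ Σ_{j≠k} w_j w_k E[x_j x_k] − (Σ_j w_j E[x_j])²`, and if `Σ_j w_j² E[x_j²] > 0`
and `p < 1` this exceeds the test-phase variance `Var[Σ_j w_j x_j]`, so the
PreDropout inconsistency ratio is `< 1`. -/
theorem preDropout_variance_formula {Ω : Type*} [MeasurableSpace Ω]
    (μ : Measure Ω) [IsProbabilityMeasure μ] (n : ℕ) (p : ℝ)
    (hp0 : 0 < p) (hp1 : p < 1)
    (x : Ω → Fin n → ℝ) (hx : ∀ j, MemLp (fun ω => x ω j) 2 μ)
    (hxmeas : Measurable x)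
    (m : Fin n → Ω → ℝ) (hmB : ∀ j, IsBernoulli μ p (m j))
    (hmiid : iIndepFun m μ)
    (hmx : IndepFun (fun ω j => m j ω) x μ)
    (w : Fin n → ℝ)
    (hpos : 0 < ∑ j, w j ^ 2 * ∫ ω, (x ω j) ^ 2 ∂μ) :
    variance (fun ω => (1 / p) * ∑ j, m j ω * w j * x ω j) μ
        = (1 / p) * (∑ j, w j ^ 2 * ∫ ω, (x ω j) ^ 2 ∂μ)
          + (∑ j, ∑ k ∈ univ \ {j}, w j * w k * ∫ ω, x ω j * x ω k ∂μ)
          - (∑ j, w j * ∫ ω, x ω j ∂μ) ^ 2 ∧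
      variance (fun ω => ∑ j, w j * x ω j) μ
        < variance (fun ω => (1 / p) * ∑ j, m j ω * w j * x ω j) μ ∧
      variance (fun ω => ∑ j, w j * x ω j) μ
          / variance (fun ω => (1 / p) * ∑ j, m j ω * w j * x ω j) μ < 1 := by
  have hpne : p ≠ 0 := ne_of_gt hp0
  have hxm : ∀ j, Measurable fun ω => x ω j := fun j => (measurable_pi_apply j).comp hxmeas
  have habs : ∀ j ω, |m j ω| ≤ 1 := by
    intro j ω
    rcases (hmB j).2.1 ω with h | h <;> simp [h]
  have hmm : ∀ j, ∫ ω, m j ω ∂μ = p := fun j => (hmB j).integral_eq hp0.le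
  -- Memℒp facts
  have hMemT : ∀ j, MemLp (fun ω => w j * x ω j) 2 μ := fun j => (hx j).const_mul _
  have hMemS : ∀ (j : Fin n), MemLp (fun ω => m j ω * w j * x ω j) 2 μ := by
    intro j
    refine (hMemT j).of_le
      ((((hmB j).1.mul_const (w j)).mul (hxm j)).aestronglyMeasurable) ?_
    filter_upwards with ω
    rw [Real.norm_eq_abs, Real.norm_eq_abs]
    calc |m j ω * w j * x ω j| = |m j ω| * |w j * x ω j| := by
          rw [mul_assoc, abs_mul]
      _ ≤ 1 * |w j * x ω j| := by
          exact mul_le_mul_of_nonneg_right (habs j ω) (abs_nonneg _)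
      _ = |w j * x ω j| := one_mul _
  have hSsum : MemLp (fun ω => ∑ j, m j ω * w j * x ω j) 2 μ :=
    memLp_finset_sum _ fun j _ => hMemS j
  have hS : MemLp (fun ω => (1 / p) * ∑ j, m j ω * w j * x ω j) 2 μ := hSsum.const_mul _
  have hT : MemLp (fun ω => ∑ j, w j * x ω j) 2 μ :=
    memLp_finset_sum _ fun j _ => hMemT j
  -- key product integrals
  have hmmk : ∀ j k : Fin n, j ≠ k → ∫ ω, m j ω * m k ω ∂μ = p ^ 2 := by
    intro j k hjk
    rw [(hmiid.indepFun hjk).integral_fun_mul_eq_mul_integral (hmB j).1.aestronglyMeasurable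
      (hmB k).1.aestronglyMeasurable, hmm j, hmm k, sq]
  have key : ∀ j k : Fin n,
      ∫ ω, (m j ω * w j * x ω j) * (m k ω * w k * x ω k) ∂μ
        = (if j = k then p else p ^ 2) * (w j * w k * ∫ ω, x ω j * x ω k ∂μ) := by
    intro j k
    have hφm : Measurable fun v : Fin n → ℝ => v j * v k :=
      (measurable_pi_apply j).mul (measurable_pi_apply k)
    have hψ : Measurable fun v : Fin n → ℝ => w j * w k * (v j * v k) :=
      measurable_const.mul hφm
    have hind : IndepFun (fun ω => m j ω * m k ω)
        (fun ω => w j * w k * (x ω j * x ω k)) μ := hmx.comp hφm hψ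
    have h1 : ∫ ω, (m j ω * w j * x ω j) * (m k ω * w k * x ω k) ∂μ
        = ∫ ω, (m j ω * m k ω) * (w j * w k * (x ω j * x ω k)) ∂μ :=
      integral_congr_ae (Filter.Eventually.of_forall fun ω => by ring)
    rw [h1, hind.integral_fun_mul_eq_mul_integral ((hmB j).1.mul (hmB k).1).aestronglyMeasurable
      (measurable_const.mul ((hxm j).mul (hxm k))).aestronglyMeasurable,
      integral_const_mul _ _]
    congr 1
    split_ifs with h
    · subst h
      have : (fun ω => m j ω * m j ω) = fun ω => m j ω := by
        funext ω
        rcases (hmB j).2.1 ω with h | h <;> simp [h]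
      rw [this, hmm j]
    · exact hmmk j k h
  -- abbreviations
  set A := ∑ j, w j ^ 2 * ∫ ω, (x ω j) ^ 2 ∂μ with hA
  set B := ∑ j, ∑ k ∈ univ \ {j}, w j * w k * ∫ ω, x ω j * x ω k ∂μ with hB
  set C := ∑ j, w j * ∫ ω, x ω j ∂μ with hC
  have hselfsq : ∀ j : Fin n, ∫ ω, x ω j * x ω j ∂μ = ∫ ω, (x ω j) ^ 2 ∂μ := by
    intro j
    refine integral_congr_ae (Filter.Eventually.of_forall fun ω => ?_)
    simp [sq]
  -- mean of S
  have hES : ∫ ω, (1 / p) * ∑ j, m j ω * w j * x ω j ∂μ = C := by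
    rw [integral_const_mul _ _, integral_finset_sum _ fun j _ => (hMemS j).integrable one_le_two]
    have hterm : ∀ j : Fin n, ∫ ω, m j ω * w j * x ω j ∂μ = p * (w j * ∫ ω, x ω j ∂μ) := by
      intro j
      have hind : IndepFun (m j) (fun ω => w j * x ω j) μ :=
        hmx.comp (measurable_pi_apply j) (measurable_const.mul (measurable_pi_apply j))
      have h1 : ∫ ω, m j ω * w j * x ω j ∂μ = ∫ ω, m j ω * (w j * x ω j) ∂μ :=
        integral_congr_ae (Filter.Eventually.of_forall fun ω => by ring)
      rw [h1, hind.integral_fun_mul_eq_mul_integral (hmB j).1.aestronglyMeasurable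
        (measurable_const.mul (hxm j)).aestronglyMeasurable, hmm j, integral_const_mul _ _]
    simp_rw [hterm]
    rw [← Finset.mul_sum, hC]
    field_simp
  -- second moment of S
  have hES2 : ∫ ω, ((1 / p) * ∑ j, m j ω * w j * x ω j) ^ 2 ∂μ = (1 / p) * A + B := by
    have h1 : (fun ω => ((1 / p) * ∑ j, m j ω * w j * x ω j) ^ 2)
        = fun ω => (1 / p) ^ 2 * (∑ j, m j ω * w j * x ω j) ^ 2 := by
      funext ω; ring
    rw [h1, integral_const_mul _ _, integral_sq_sum hMemS]
    simp_rw [key]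
    have hsplit : ∀ j : Fin n,
        ∑ k, (if j = k then p else p ^ 2) * (w j * w k * ∫ ω, x ω j * x ω k ∂μ)
          = p * (w j ^ 2 * ∫ ω, (x ω j) ^ 2 ∂μ)
            + p ^ 2 * ∑ k ∈ univ \ {j}, w j * w k * ∫ ω, x ω j * x ω k ∂μ := by
      intro j
      rw [Finset.sum_eq_sum_sdiff_singleton_add (Finset.mem_univ j)]
      have hdiag : (if j = j then p else p ^ 2) * (w j * w j * ∫ ω, x ω j * x ω j ∂μ)
          = p * (w j ^ 2 * ∫ ω, (x ω j) ^ 2 ∂μ) := by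
        rw [if_pos rfl, hselfsq j, sq]
      have hoff : ∑ k ∈ univ \ {j},
          (if j = k then p else p ^ 2) * (w j * w k * ∫ ω, x ω j * x ω k ∂μ)
            = p ^ 2 * ∑ k ∈ univ \ {j}, w j * w k * ∫ ω, x ω j * x ω k ∂μ := by
        rw [Finset.mul_sum]
        refine Finset.sum_congr rfl fun k hk => ?_
        have : j ≠ k := by
          intro h
          simp [h] at hk
        rw [if_neg this]
      rw [hdiag, hoff]
      ring
    simp_rw [hsplit]
    rw [Finset.sum_add_distrib, ← Finset.mul_sum, ← Finset.mul_sum, ← hA, ← hB]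
    field_simp
  -- mean of T
  have hET : ∫ ω, ∑ j, w j * x ω j ∂μ = C := by
    rw [integral_finset_sum _ fun j _ => (hMemT j).integrable one_le_two]
    simp_rw [integral_const_mul]
    exact hC.symm
  -- second moment of T
  have hET2 : ∫ ω, (∑ j, w j * x ω j) ^ 2 ∂μ = A + B := by
    rw [integral_sq_sum hMemT]
    have hterm : ∀ j k : Fin n, ∫ ω, (w j * x ω j) * (w k * x ω k) ∂μ
        = w j * w k * ∫ ω, x ω j * x ω k ∂μ := by
      intro j k
      have h1 : ∫ ω, (w j * x ω j) * (w k * x ω k) ∂μ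
          = ∫ ω, w j * w k * (x ω j * x ω k) ∂μ :=
        integral_congr_ae (Filter.Eventually.of_forall fun ω => by ring)
      rw [h1, integral_const_mul _ _]
    simp_rw [hterm]
    have hsplit : ∀ j : Fin n,
        ∑ k, w j * w k * ∫ ω, x ω j * x ω k ∂μ
          = w j ^ 2 * ∫ ω, (x ω j) ^ 2 ∂μ
            + ∑ k ∈ univ \ {j}, w j * w k * ∫ ω, x ω j * x ω k ∂μ := by
      intro j
      rw [Finset.sum_eq_sum_sdiff_singleton_add (Finset.mem_univ j), hselfsq j]
      ring
    simp_rw [hsplit]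
    rw [Finset.sum_add_distrib, ← hA, ← hB]
  -- variances
  have hVarS : variance (fun ω => (1 / p) * ∑ j, m j ω * w j * x ω j) μ
      = (1 / p) * A + B - C ^ 2 := by
    rw [variance_eq_sub hS]
    have e2 : (μ[(fun ω => (1 / p) * ∑ j, m j ω * w j * x ω j) ^ 2]) = (1 / p) * A + B := by
      rw [← hES2]
      rfl
    have e1 : (μ[fun ω => (1 / p) * ∑ j, m j ω * w j * x ω j]) = C := hES
    rw [e2, e1]
  have hVarT : variance (fun ω => ∑ j, w j * x ω j) μ = A + B - C ^ 2 := by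
    rw [variance_eq_sub hT]
    have e2 : (μ[(fun ω => ∑ j, w j * x ω j) ^ 2]) = A + B := by
      rw [← hET2]
      rfl
    rw [e2, hET]
  have honelt : 1 < 1 / p := one_lt_one_div hp0 hp1
  have hlt : variance (fun ω => ∑ j, w j * x ω j) μ
      < variance (fun ω => (1 / p) * ∑ j, m j ω * w j * x ω j) μ := by
    rw [hVarS, hVarT]
    have : A < (1 / p) * A := by
      nlinarith
    linarith
  refine ⟨hVarS, hlt, ?_⟩
  have hTnn : 0 ≤ variance (fun ω => ∑ j, w j * x ω j) μ := variance_nonneg _ _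
  have hSpos : 0 < variance (fun ω => (1 / p) * ∑ j, m j ω * w j * x ω j) μ :=
    lt_of_le_of_lt hTnn hlt
  rw [div_lt_one hSpos]
  exact hlt
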